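/- Let Z_LP(B) and Z_IP(B) denote the optimal values of the fractional and 0-1 knapsack problems with budget B. Suppose the ratios v_i/b_i are distinct and the optimal fractional solution with budget B has a unique fractional item j with fraction x*_j. Then Z_IP(B) ≤ Z_IP(B - b_j x*_j) + v_j. -/

import Mathlib

/-- Optimal value of the 0-1 knapsack with budget `B`. -/
noncomputable def ZIP (n : ℕ) (v b : Fin n → ℝ) (B : ℝ) : ℝ :=
  sSup {t : ℝ | ∃ x : Fin n → ℝ, (∀ i, x i = 0 ∨ x i = 1) ∧
    (∑ i, b i * x i) ≤ B ∧ t = ∑ i, v i * x i}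

/-- if the optimal fractional solution has a unique fractional item `j`
with fraction `x j`, then `Z_IP(B) ≤ Z_IP(B - b_j x_j) + v_j`. -/
theorem ZIP_budget_split (n : ℕ) (v b : Fin n → ℝ) (B : ℝ)
    (hv : ∀ i, 0 < v i) (hb : ∀ i, 0 < b i) (hB : 0 < B)
    (hdist : ∀ i k : Fin n, i ≠ k → v i / b i ≠ v k / b k)
    (x : Fin n → ℝ) (j : Fin n)
    (hxlb : ∀ i, 0 ≤ x i) (hxub : ∀ i, x i ≤ 1)
    (hxfeas : ∑ i, b i * x i ≤ B)
    (hxopt : ∀ y : Fin n → ℝ, (∀ i, 0 ≤ y i ∧ y i ≤ 1) → (∑ i, b i * y i ≤ B) →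
      ∑ i, v i * y i ≤ ∑ i, v i * x i)
    (hjfrac : 0 < x j ∧ x j < 1)
    (hunique : ∀ i, i ≠ j → x i = 0 ∨ x i = 1) :
    ZIP n v b B ≤ ZIP n v b (B - b j * x j) + v j := by
  have hsum_nonneg : 0 ≤ ∑ i, v i * x i :=
    Finset.sum_nonneg fun i _ => mul_nonneg (hv i).le (hxlb i)
  have h1 : ZIP n v b B ≤ ∑ i, v i * x i := by
    apply Real.sSup_le _ hsum_nonneg
    rintro t ⟨y, hy01, hyb, rfl⟩
    exact hxopt y (fun i => by rcases hy01 i with h | h <;> simp [h]) hyb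
  set x' : Fin n → ℝ := fun i => if i = j then 0 else x i with hx'
  have hx'int : ∀ i, x' i = 0 ∨ x' i = 1 := by
    intro i
    by_cases h : i = j
    · left; simp [hx', h]
    · simpa [hx', h] using hunique i h
  have hsplit : ∀ f : Fin n → ℝ, ∑ i, f i * x' i = (∑ i, f i * x i) - f j * x j := by
    intro f
    have h1' : ∑ i, (f i * x i - f i * x' i) = f j * x j := by
      rw [Finset.sum_eq_single j]
      · simp [hx']
      · intro i _ hij; simp [hx', hij]
      · simp
    have h2' : ∑ i, (f i * x i - f i * x' i)
        = ∑ i, f i * x i - ∑ i, f i * x' i := Finset.sum_sub_distrib _ _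
    linarith
  have hbdd : BddAbove {t : ℝ | ∃ y : Fin n → ℝ, (∀ i, y i = 0 ∨ y i = 1) ∧
      (∑ i, b i * y i) ≤ B - b j * x j ∧ t = ∑ i, v i * y i} := by
    refine ⟨∑ i, v i, ?_⟩
    rintro t ⟨y, hy01, _, rfl⟩
    apply Finset.sum_le_sum
    intro i _
    rcases hy01 i with h | h <;> simp [h, (hv i).le]
  have h2 : ∑ i, v i * x' i ≤ ZIP n v b (B - b j * x j) := by
    apply le_csSup hbdd
    refine ⟨x', hx'int, ?_, rfl⟩
    rw [hsplit b]; linarith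
  have h3 : v j * x j ≤ v j := by
    have := mul_le_of_le_one_right (hv j).le (hxub j); linarith
  have h4 := hsplit v
  linarith
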